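/- For integers n ≥ 2 and m ≥ 1, the function g(θ) = 2cos(θ/2)cos((n+3m)θ) + cos((n−3/2)θ) satisfies g'(θ) < 0 for all θ in the open interval ((π/2)/(n+3m), (π/2)/(n+3m/2−3/4)). -/

import Mathlib

open Real

theorem stmt_7 (n m : ℕ) (hn : 2 ≤ n) (hm : 1 ≤ m) :
    ∀ θ ∈ Set.Ioo ((π / 2) / ((n : ℝ) + 3 * m)) ((π / 2) / ((n : ℝ) + 3 * m / 2 - 3 / 4)),
      deriv (fun θ : ℝ => 2 * Real.cos (θ / 2) * Real.cos (((n : ℝ) + 3 * m) * θ)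
        + Real.cos (((n : ℝ) - 3 / 2) * θ)) θ < 0 := by
  intro θ hθ
  obtain ⟨h1, h2⟩ := hθ
  set A : ℝ := (n : ℝ) + 3 * m with hA
  set B : ℝ := (n : ℝ) - 3 / 2 with hB
  have hn' : (2 : ℝ) ≤ (n : ℝ) := by exact_mod_cast hn
  have hm' : (1 : ℝ) ≤ (m : ℝ) := by exact_mod_cast hm
  have hApos : (0 : ℝ) < A := by simp [hA]; linarith
  have hA5 : (5 : ℝ) ≤ A := by simp [hA]; linarith
  have hBpos : (0 : ℝ) < B := by simp [hB]; linarith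
  have hBhalf : (1/2 : ℝ) ≤ B := by simp [hB]; linarith
  have hub : (n : ℝ) + 3 * m / 2 - 3 / 4 = (A + B) / 2 := by
    simp [hA, hB]; ring
  rw [hub] at h2
  clear_value A B
  clear hA hB
  have hπ : (0 : ℝ) < π := Real.pi_pos
  have hθpos : 0 < θ := lt_trans (by positivity) h1
  have hAθ : π / 2 < A * θ := by
    rw [div_lt_iff₀ hApos] at h1
    linarith [h1]
  have hsum : θ * (A + B) < π := by
    rw [lt_div_iff₀ (by linarith : (0:ℝ) < (A + B)/2)] at h2
    nlinarith [h2]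
  have hAθπ : A * θ < π := by nlinarith
  have hBθπ : B * θ < π := by nlinarith
  have hsinA : 0 < Real.sin (A * θ) :=
    Real.sin_pos_of_pos_of_lt_pi (by nlinarith) hAθπ
  have hsinB : 0 < Real.sin (B * θ) :=
    Real.sin_pos_of_pos_of_lt_pi (by positivity) hBθπ
  have hcos : 0 < Real.cos (θ / 2) := by
    apply Real.cos_pos_of_mem_Ioo
    constructor
    · linarith
    · nlinarith
  have hs2 : 0 ≤ Real.sin ((A + 1/2) * θ) := by
    apply Real.sin_nonneg_of_nonneg_of_le_pi
    · positivity
    · nlinarith [mul_le_mul_of_nonneg_left hBhalf (le_of_lt hθpos)]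
  have key : Real.sin ((A + 1/2) * θ)
      = Real.sin (A * θ) * Real.cos (θ / 2) + Real.cos (A * θ) * Real.sin (θ / 2) := by
    rw [show (A + 1/2) * θ = A * θ + θ / 2 by ring, Real.sin_add]
  -- compute the derivative
  have d1 : HasDerivAt (fun θ : ℝ => Real.cos (θ / 2)) (-Real.sin (θ / 2) * (1/2)) θ :=
    (Real.hasDerivAt_cos _).comp θ ((hasDerivAt_id θ).div_const 2)
  have d2 : HasDerivAt (fun θ : ℝ => Real.cos (A * θ)) (-Real.sin (A * θ) * A) θ := by
    have := (Real.hasDerivAt_cos (A * θ)).comp θ ((hasDerivAt_id θ).const_mul A)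
    simpa [Function.comp_def] using this
  have d3 : HasDerivAt (fun θ : ℝ => Real.cos (B * θ)) (-Real.sin (B * θ) * B) θ := by
    have := (Real.hasDerivAt_cos (B * θ)).comp θ ((hasDerivAt_id θ).const_mul B)
    simpa [Function.comp_def] using this
  have hd : HasDerivAt (fun θ : ℝ => 2 * Real.cos (θ / 2) * Real.cos (A * θ)
      + Real.cos (B * θ))
      ((2 * (-Real.sin (θ / 2) * (1/2))) * Real.cos (A * θ)
        + (2 * Real.cos (θ / 2)) * (-Real.sin (A * θ) * A)
        + (-Real.sin (B * θ) * B)) θ :=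
    ((d1.const_mul 2).mul d2).add d3
  rw [hd.deriv]
  nlinarith [mul_pos (mul_pos (by linarith : (0:ℝ) < 2 * A - 1) hcos) hsinA,
    mul_pos hBpos hsinB, key, hs2]
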